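/- arXiv:2012.06645 — 4 statements merged into one kernel-verified Lean document; each statement's English description precedes it below -/
import Mathlib

section
/- Let k, L, U, x₀ be real numbers and C > 0, and define the logistic duration D(r) = L + U/(1 + e^{-C(r - x₀)}) and the price function P(r) = k·e^{-L·r}·(1 + e^{C(r - x₀)})^{-U/C}. Then P is differentiable on ℝ and satisfies the duration differential equation P'(r) = -D(r)·P(r) for every r ∈ ℝ. -/
open Real

lemma price_hasDerivAt (k L U x₀ C : ℝ) (hC : 0 < C) (r : ℝ) :
    HasDerivAt (fun r =>
      k * Real.exp (-L * r) * (1 + Real.exp (C * (r - x₀))) ^ (-U / C))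
      (-(L + U / (1 + Real.exp (-C * (r - x₀)))) *
        (k * Real.exp (-L * r) * (1 + Real.exp (C * (r - x₀))) ^ (-U / C))) r := by
  have hpos : 0 < 1 + Real.exp (C * (r - x₀)) := by positivity
  have h1 : HasDerivAt (fun r : ℝ => 1 + Real.exp (C * (r - x₀)))
      (Real.exp (C * (r - x₀)) * C) r := by
    have := (((hasDerivAt_id r).sub_const x₀).const_mul C).exp
    simpa using this.const_add 1
  have h2 := h1.rpow_const (p := -U / C) (Or.inl (ne_of_gt hpos))
  have h3 : HasDerivAt (fun r : ℝ => k * Real.exp (-L * r))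
      (k * (Real.exp (-L * r) * -L)) r := by
    have := ((hasDerivAt_id r).const_mul (-L)).exp
    simpa [mul_comm] using this.const_mul k
  have h4 := h3.mul h2
  convert h4 using 1
  case e'_4 => rfl
  case e'_5 => rfl
  case e'_8 => rfl
  have hgne : (1 + Real.exp (C * (r - x₀))) ≠ 0 := ne_of_gt hpos
  have hsub : (1 + Real.exp (C * (r - x₀))) ^ (-U / C - 1)
      = (1 + Real.exp (C * (r - x₀))) ^ (-U / C) / (1 + Real.exp (C * (r - x₀))) := by
    rw [Real.rpow_sub hpos, Real.rpow_one]
  have hneg : Real.exp (-C * (r - x₀)) = 1 / Real.exp (C * (r - x₀)) := by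
    rw [one_div, ← Real.exp_neg]; congr 1; ring
  have hpne : (1 + Real.exp (-C * (r - x₀))) ≠ 0 := by positivity
  have hexpne : Real.exp (C * (r - x₀)) ≠ 0 := Real.exp_ne_zero _
  rw [hsub, hneg]
  field_simp
  ring

/-- The logistic-duration price function `P(r) = k·e^{-L·r}·(1 + e^{C(r - x₀)})^{-U/C}`
is differentiable and satisfies the duration differential equation
`P'(r) = -D(r)·P(r)` where `D(r) = L + U/(1 + e^{-C(r - x₀)})`. -/
theorem price_satisfies_duration_ode (k L U x₀ C : ℝ) (hC : 0 < C)
    (D P : ℝ → ℝ)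
    (hD : D = fun r => L + U / (1 + Real.exp (-C * (r - x₀))))
    (hP : P = fun r =>
      k * Real.exp (-L * r) * (1 + Real.exp (C * (r - x₀))) ^ (-U / C)) :
    Differentiable ℝ P ∧ ∀ r : ℝ, deriv P r = -D r * P r := by
  subst hD hP
  constructor
  · intro r
    exact (price_hasDerivAt k L U x₀ C hC r).differentiableAt
  · intro r
    exact (price_hasDerivAt k L U x₀ C hC r).deriv
end

section
/- Let r be a real random variable with Gaussian law of mean m and variance s² > 0, let a, b, c, d ∈ ℝ with (a, c) ≠ (0, 0), and set Y = e^{a·r + b} + e^{c·r + d}. With μ₁ = a·m + b, σ₁² = a²s², μ₂ = c·m + d, σ₂² = c²s², Cov = a·c·s², define σ_X² = log( (e^{2μ₁ + 2σ₁²} + 2·e^{μ₁ + μ₂ + (σ₁² + σ₂² + 2·Cov)/2} + e^{2μ₂ + 2σ₂²}) / (e^{μ₁ + σ₁²/2} + e^{μ₂ + σ₂²/2})² ) and μ_X = log(e^{μ₁ + σ₁²/2} + e^{μ₂ + σ₂²/2}) - σ_X²/2. Then σ_X² ≥ 0, and if X has law gaussianReal μ_X σ_X² and Z = e^X, the first two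 moments match: E[Z] = E[Y] and E[Z²] = E[Y²]. -/
open MeasureTheory ProbabilityTheory Real NNReal
open scoped ENNReal

lemma gauss_pdf_mul_exp (μ : ℝ) (v : ℝ≥0) (hv : v ≠ 0) (t x : ℝ) :
    Real.exp (t * x) * gaussianPDFReal μ v x
      = Real.exp (t * μ + v * t ^ 2 / 2) * gaussianPDFReal (μ + v * t) v x := by
  have hv' : (v : ℝ) ≠ 0 := by exact_mod_cast hv
  simp only [gaussianPDFReal]
  rw [mul_left_comm, ← Real.exp_add, mul_left_comm, ← Real.exp_add]
  congr 1
  field_simp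
  ring

lemma integrable_exp_mul_gaussianReal (μ : ℝ) (v : ℝ≥0) (t : ℝ) :
    Integrable (fun x => Real.exp (t * x)) (gaussianReal μ v) := by
  rcases eq_or_ne v 0 with hv | hv
  · subst hv
    rw [gaussianReal_zero_var]
    have he : (fun x => Real.exp (t * x)) =ᵐ[Measure.dirac μ] fun _ => Real.exp (t * μ) := by
      rw [Filter.EventuallyEq, ae_dirac_eq]
      exact Filter.eventually_pure.2 rfl
    exact (integrable_const _).congr he.symm
  · rw [gaussianReal_of_var_ne_zero μ hv]
    have hmeas : Measurable fun x => (gaussianPDFReal μ v x).toNNReal :=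
      (measurable_gaussianPDFReal μ v).real_toNNReal
    have h0 : gaussianPDF μ v = fun x => ((gaussianPDFReal μ v x).toNNReal : ℝ≥0∞) := rfl
    rw [h0, integrable_withDensity_iff_integrable_smul hmeas]
    have key : ∀ x : ℝ, (gaussianPDFReal μ v x).toNNReal • Real.exp (t * x)
        = Real.exp (t * μ + v * t ^ 2 / 2) * gaussianPDFReal (μ + v * t) v x := by
      intro x
      rw [NNReal.smul_def, Real.coe_toNNReal _ (gaussianPDFReal_nonneg μ v x), smul_eq_mul,
        mul_comm, gauss_pdf_mul_exp μ v hv]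
    simp only [key]
    exact (integrable_gaussianPDFReal _ _).const_mul _

lemma integral_exp_mul_gaussianReal (μ : ℝ) (v : ℝ≥0) (t : ℝ) :
    ∫ x, Real.exp (t * x) ∂(gaussianReal μ v) = Real.exp (t * μ + v * t ^ 2 / 2) := by
  rcases eq_or_ne v 0 with hv | hv
  · simp [hv, gaussianReal_zero_var, integral_dirac]
  · rw [gaussianReal_of_var_ne_zero μ hv]
    have hmeas : Measurable fun x => (gaussianPDFReal μ v x).toNNReal :=
      (measurable_gaussianPDFReal μ v).real_toNNReal
    have h0 : gaussianPDF μ v = fun x => ((gaussianPDFReal μ v x).toNNReal : ℝ≥0∞) := rfl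
    rw [h0, integral_withDensity_eq_integral_smul hmeas]
    have key : ∀ x : ℝ, (gaussianPDFReal μ v x).toNNReal • Real.exp (t * x)
        = Real.exp (t * μ + v * t ^ 2 / 2) * gaussianPDFReal (μ + v * t) v x := by
      intro x
      rw [NNReal.smul_def, Real.coe_toNNReal _ (gaussianPDFReal_nonneg μ v x), smul_eq_mul,
        mul_comm, gauss_pdf_mul_exp μ v hv]
    simp only [key]
    rw [integral_const_mul, integral_gaussianPDFReal_eq_one _ hv, mul_one]

lemma exp_affine_moment {Ω : Type*} [MeasureSpace Ω] (r : Ω → ℝ) (m : ℝ) (v : ℝ≥0)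
    (hr : Measure.map r ℙ = gaussianReal m v) (hrm : AEMeasurable r ℙ) (t u : ℝ) :
    Integrable (fun ω => Real.exp (t * r ω + u)) ℙ ∧
      ∫ ω, Real.exp (t * r ω + u) ∂ℙ = Real.exp (t * m + u + v * t ^ 2 / 2) := by
  have hcont : Continuous fun x : ℝ => Real.exp (t * x + u) := by continuity
  have hintg : Integrable (fun x => Real.exp (t * x + u)) (gaussianReal m v) := by
    simp only [Real.exp_add]
    exact (integrable_exp_mul_gaussianReal m v t).mul_const _
  constructor
  · rw [← hr] at hintg
    exact (integrable_map_measure hcont.aestronglyMeasurable hrm).mp hintg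
  · rw [show (∫ ω, Real.exp (t * r ω + u) ∂ℙ) = ∫ x, Real.exp (t * x + u) ∂(Measure.map r ℙ)
      from (integral_map hrm (by rw [hr]; exact hcont.aestronglyMeasurable)).symm, hr]
    simp only [Real.exp_add]
    rw [integral_mul_const, integral_exp_mul_gaussianReal]
    simp only [← Real.exp_add]
    ring_nf

/-- Moment matching of a sum of two correlated lognormals `Y = e^{a·r+b} + e^{c·r+d}`
(`r ~ N(m, s²)`, `(a,c) ≠ (0,0)`) by a single lognormal `Z = e^X`,
`X ~ N(μ_X, σ_X²)`: the matching parameters satisfy `σ_X² ≥ 0` and the first two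
moments agree, `E[Z] = E[Y]` and `E[Z²] = E[Y²]`. -/
theorem lognormal_moment_matching {Ω Ω' : Type*} [MeasureSpace Ω] [MeasureSpace Ω']
    [IsProbabilityMeasure (ℙ : Measure Ω)] [IsProbabilityMeasure (ℙ : Measure Ω')]
    (r : Ω → ℝ) (m s : ℝ) (hs : 0 < s ^ 2)
    (hr : Measure.map r ℙ = gaussianReal m ⟨s ^ 2, sq_nonneg s⟩)
    (a b c d : ℝ) (hac : (a, c) ≠ ((0 : ℝ), (0 : ℝ)))
    (Y : Ω → ℝ) (hY : Y = fun ω => Real.exp (a * r ω + b) + Real.exp (c * r ω + d))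
    (μ₁ σ₁sq μ₂ σ₂sq Cov σXsq μX : ℝ)
    (hμ₁ : μ₁ = a * m + b) (hσ₁ : σ₁sq = a ^ 2 * s ^ 2)
    (hμ₂ : μ₂ = c * m + d) (hσ₂ : σ₂sq = c ^ 2 * s ^ 2)
    (hCov : Cov = a * c * s ^ 2)
    (hσX : σXsq = Real.log
      ((Real.exp (2 * μ₁ + 2 * σ₁sq) +
          2 * Real.exp (μ₁ + μ₂ + (σ₁sq + σ₂sq + 2 * Cov) / 2) +
          Real.exp (2 * μ₂ + 2 * σ₂sq)) /
        (Real.exp (μ₁ + σ₁sq / 2) + Real.exp (μ₂ + σ₂sq / 2)) ^ 2))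
    (hμX : μX = Real.log (Real.exp (μ₁ + σ₁sq / 2) + Real.exp (μ₂ + σ₂sq / 2)) - σXsq / 2) :
    0 ≤ σXsq ∧
    ∀ (X : Ω' → ℝ), Measure.map X ℙ = gaussianReal μX σXsq.toNNReal →
      (∫ ω', Real.exp (X ω') ∂ℙ) = (∫ ω, Y ω ∂ℙ) ∧
      (∫ ω', Real.exp (X ω') ^ 2 ∂ℙ) = (∫ ω, Y ω ^ 2 ∂ℙ) := by
  have e2 : ∀ x : ℝ, Real.exp x ^ 2 = Real.exp (2 * x) := fun x => by
    rw [two_mul, Real.exp_add, sq]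
  set v : ℝ≥0 := ⟨s ^ 2, sq_nonneg s⟩ with hvdef
  have hv : (v : ℝ) = s ^ 2 := rfl
  have hrm : AEMeasurable r ℙ := aemeasurable_of_map_neZero (by rw [hr]; infer_instance)
  have E1 := exp_affine_moment r m v hr hrm a b
  have E2 := exp_affine_moment r m v hr hrm c d
  have E3 := exp_affine_moment r m v hr hrm (2 * a) (2 * b)
  have E4 := exp_affine_moment r m v hr hrm (a + c) (b + d)
  have E5 := exp_affine_moment r m v hr hrm (2 * c) (2 * d)
  set S : ℝ := Real.exp (μ₁ + σ₁sq / 2) + Real.exp (μ₂ + σ₂sq / 2) with hSdef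
  set Q : ℝ := Real.exp (2 * μ₁ + 2 * σ₁sq) +
      2 * Real.exp (μ₁ + μ₂ + (σ₁sq + σ₂sq + 2 * Cov) / 2) +
      Real.exp (2 * μ₂ + 2 * σ₂sq) with hQdef
  have hSpos : 0 < S := by positivity
  have hQpos : 0 < Q := by positivity
  have hEY : (∫ ω, Y ω ∂ℙ) = S := by
    rw [hY, integral_add E1.1 E2.1, E1.2, E2.2, hSdef, hμ₁, hσ₁, hμ₂, hσ₂, hv]
    ring_nf
  have hYsq : ∀ ω, Y ω ^ 2 = Real.exp (2 * a * r ω + 2 * b) +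
      (2 * Real.exp ((a + c) * r ω + (b + d)) + Real.exp (2 * c * r ω + 2 * d)) := by
    intro ω
    have key : ∀ p q : ℝ, (Real.exp p + Real.exp q) ^ 2
        = Real.exp (2 * p) + (2 * Real.exp (p + q) + Real.exp (2 * q)) := by
      intro p q
      rw [add_sq, e2, e2, mul_assoc, ← Real.exp_add]
      ring
    rw [hY]
    simp only []
    rw [key]
    ring_nf
  have I4 : Integrable (fun ω => 2 * Real.exp ((a + c) * r ω + (b + d))) ℙ :=
    E4.1.const_mul 2
  have I45 : Integrable (fun ω => 2 * Real.exp ((a + c) * r ω + (b + d))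
      + Real.exp (2 * c * r ω + 2 * d)) ℙ := I4.add E5.1
  have hIsq : Integrable (fun ω => Y ω ^ 2) ℙ := by
    simp only [hYsq]
    exact E3.1.add I45
  have hEY2 : (∫ ω, Y ω ^ 2 ∂ℙ) = Q := by
    simp only [hYsq]
    rw [integral_add E3.1 I45, integral_add I4 E5.1, MeasureTheory.integral_const_mul,
      E3.2, E4.2, E5.2, hQdef, hμ₁, hσ₁, hμ₂, hσ₂, hCov, hv]
    ring_nf
  have hYm : AEStronglyMeasurable Y ℙ := by
    rw [hY]
    exact ((Real.measurable_exp.comp_aemeasurable ((hrm.const_mul a).add_const b)).add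
      (Real.measurable_exp.comp_aemeasurable ((hrm.const_mul c).add_const d))).aestronglyMeasurable
  have hmem : MemLp Y 2 ℙ := (memLp_two_iff_integrable_sq hYm).mpr hIsq
  have hvar := variance_nonneg Y (ℙ : Measure Ω)
  rw [variance_eq_sub hmem] at hvar
  have hSQ : S ^ 2 ≤ Q := by
    have h1 : (∫ ω, (Y ^ 2) ω ∂ℙ) = Q := by simpa [Pi.pow_apply] using hEY2
    rw [show (ℙ : Measure Ω)[Y ^ 2] = Q from h1, show (ℙ : Measure Ω)[Y] = S from hEY] at hvar
    linarith
  have h0 : 0 ≤ σXsq := by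
    rw [hσX]
    exact Real.log_nonneg ((one_le_div (by positivity)).mpr hSQ)
  refine ⟨h0, fun X hX => ?_⟩
  have hXm : AEMeasurable X ℙ := aemeasurable_of_map_neZero (by rw [hX]; infer_instance)
  have hcoe : ((σXsq.toNNReal : ℝ≥0) : ℝ) = σXsq := Real.coe_toNNReal _ h0
  have F1 := exp_affine_moment X μX σXsq.toNNReal hX hXm 1 0
  have F2 := exp_affine_moment X μX σXsq.toNNReal hX hXm 2 0
  have hlogQ : Real.exp σXsq = Q / S ^ 2 := by
    rw [hσX, Real.exp_log (by positivity)]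
  constructor
  · have := F1.2
    simp only [one_mul, add_zero, one_pow, mul_one] at this
    rw [this, hcoe, hEY, hμX]
    rw [show Real.log S - σXsq / 2 + σXsq / 2 = Real.log S by ring, Real.exp_log hSpos]
  · have := F2.2
    simp only [add_zero] at this
    have hre : (∫ ω', Real.exp (X ω') ^ 2 ∂ℙ) = ∫ ω', Real.exp (2 * X ω') ∂ℙ := by
      simp only [e2]
    rw [hre, this, hcoe, hEY2, hμX]
    rw [show 2 * (Real.log S - σXsq / 2) + σXsq * 2 ^ 2 / 2
        = Real.log S + Real.log S + σXsq by ring]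
    rw [Real.exp_add, Real.exp_add, Real.exp_log hSpos, hlogQ]
    field_simp
end

section
/- Let μ ∈ ℝ, σ > 0, K > 0. Then ∫ max(e^x - K, 0) d(gaussianReal μ σ²)(x) = M₁·Φ(d₁) - K·Φ(d₂), where M₁ = e^{μ + σ²/2}, d₁ = (log(M₁/K) + σ²/2)/σ, d₂ = (log(M₁/K) - σ²/2)/σ, and Φ is the cumulative distribution function of the standard normal distribution. -/
open MeasureTheory ProbabilityTheory Real Set
open scoped ENNReal NNReal

lemma gauss_neg_map : (gaussianReal 0 1).map (fun x : ℝ => -x) = gaussianReal 0 1 := by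
  have h := gaussianReal_map_const_mul (μ := 0) (v := 1) (-1 : ℝ)
  simp_rw [neg_one_mul] at h
  rw [h]
  congr 1
  · ring
  · ext
    norm_num

lemma phi_Ici (m c : ℝ) :
    ∫ y in Ici c, gaussianPDFReal m 1 y =
      ProbabilityTheory.cdf (gaussianReal 0 1) (m - c) := by
  have hnn : 0 ≤ ∫ y in Ici c, gaussianPDFReal m 1 y :=
    setIntegral_nonneg measurableSet_Ici fun _ _ => gaussianPDFReal_nonneg _ _ _
  have h1 : gaussianReal m 1 (Ici c)
      = ENNReal.ofReal (∫ y in Ici c, gaussianPDFReal m 1 y) :=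
    gaussianReal_apply_eq_integral m one_ne_zero _
  have hmap : gaussianReal m 1 = (gaussianReal 0 1).map (fun x : ℝ => -x + m) := by
    have h3 : gaussianReal m 1 = ((gaussianReal 0 1).map (fun x : ℝ => -x)).map (· + m) := by
      rw [gauss_neg_map, gaussianReal_map_add_const m, zero_add]
    rw [h3, Measure.map_map (measurable_add_const m) measurable_neg]
    rfl
  have h2 : gaussianReal m 1 (Ici c) = gaussianReal 0 1 (Iic (m - c)) := by
    rw [hmap, Measure.map_apply (by fun_prop) measurableSet_Ici]
    congr 1
    ext x
    simp [le_sub_iff_add_le, neg_add_eq_sub, sub_le_comm]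
  rw [cdf_eq_real, measureReal_def, ← h2, h1, ENNReal.toReal_ofReal hnn]

/-- Black–Scholes–Merton call expectation: for a lognormal underlying `e^x`,
`x ~ N(μ, σ²)`, and strike `K > 0`,
`E[(e^x - K)⁺] = M₁·Φ(d₁) - K·Φ(d₂)` with `M₁ = e^{μ + σ²/2}`,
`d₁ = (log(M₁/K) + σ²/2)/σ`, `d₂ = (log(M₁/K) - σ²/2)/σ`,
and `Φ` the standard normal CDF. -/
theorem blackScholes_call_expectation (μ σ K : ℝ) (hσ : 0 < σ) (hK : 0 < K)
    (Φ : ℝ → ℝ) (hΦ : Φ = fun x => ProbabilityTheory.cdf (gaussianReal 0 1) x)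
    (M₁ d₁ d₂ : ℝ)
    (hM₁ : M₁ = Real.exp (μ + σ ^ 2 / 2))
    (hd₁ : d₁ = (Real.log (M₁ / K) + σ ^ 2 / 2) / σ)
    (hd₂ : d₂ = (Real.log (M₁ / K) - σ ^ 2 / 2) / σ) :
    ∫ x, max (Real.exp x - K) 0 ∂(gaussianReal μ ⟨σ ^ 2, sq_nonneg σ⟩) =
      M₁ * Φ d₁ - K * Φ d₂ := by
  subst hΦ
  set c : ℝ := (Real.log K - μ) / σ with hc
  have hσ' : σ ≠ 0 := hσ.ne'
  -- d₁ and d₂ in terms of c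
  have hlog : Real.log (M₁ / K) = μ + σ ^ 2 / 2 - Real.log K := by
    rw [hM₁, Real.log_div (Real.exp_ne_zero _) hK.ne', Real.log_exp]
  have hd1' : d₁ = σ - c := by
    rw [hd₁, hlog, hc]; field_simp; ring
  have hd2' : d₂ = 0 - c := by
    rw [hd₂, hlog, hc]; field_simp; ring
  -- measure identification
  have hmeas : gaussianReal μ ⟨σ ^ 2, sq_nonneg σ⟩
      = (gaussianReal 0 1).map (fun y : ℝ => σ * y + μ) := by
    have h1 : (gaussianReal 0 1).map (fun y : ℝ => σ * y)
        = gaussianReal 0 ⟨σ ^ 2, sq_nonneg σ⟩ := by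
      have h := gaussianReal_map_const_mul (μ := 0) (v := 1) σ
      simp at h; exact h
    have h2 : ((gaussianReal 0 1).map (fun y : ℝ => σ * y)).map (· + μ)
        = gaussianReal μ ⟨σ ^ 2, sq_nonneg σ⟩ := by
      rw [h1]
      have h3 := gaussianReal_map_add_const (μ := 0) (v := ⟨σ ^ 2, sq_nonneg σ⟩) μ
      rw [zero_add] at h3
      exact h3
    rw [← h2, Measure.map_map (measurable_add_const μ) (measurable_const_mul σ)]
    rfl
  have hcont : Continuous fun x : ℝ => max (Real.exp x - K) 0 :=
    (Real.continuous_exp.sub continuous_const).max continuous_const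
  rw [hmeas, integral_map (by fun_prop) hcont.aestronglyMeasurable]
  have hgp : gaussianPDF 0 1 = fun y => ((Real.toNNReal (gaussianPDFReal 0 1 y)) : ℝ≥0∞) := rfl
  have hsmul : ∀ y : ℝ,
      (Real.toNNReal (gaussianPDFReal 0 1 y)) • max (Real.exp (σ * y + μ) - K) 0
      = gaussianPDFReal 0 1 y * max (Real.exp (σ * y + μ) - K) 0 := fun y => by
    rw [NNReal.smul_def, Real.coe_toNNReal _ (gaussianPDFReal_nonneg _ _ _), smul_eq_mul]
  have hPint : ∫ y, max (Real.exp (σ * y + μ) - K) 0 ∂(gaussianReal 0 1)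
      = ∫ y, gaussianPDFReal 0 1 y * max (Real.exp (σ * y + μ) - K) 0 := by
    rw [gaussianReal_of_var_ne_zero 0 one_ne_zero, hgp,
      integral_withDensity_eq_integral_smul ((measurable_gaussianPDFReal 0 1).real_toNNReal)]
    simp_rw [hsmul]
  rw [hPint]
  -- key pointwise identity
  have hkey : ∀ y : ℝ, gaussianPDFReal 0 1 y * Real.exp (σ * y + μ)
      = M₁ * gaussianPDFReal σ 1 y := by
    intro y
    simp only [gaussianPDFReal, NNReal.coe_one, mul_one, sub_zero, hM₁]
    rw [mul_assoc, ← Real.exp_add, mul_comm (Real.exp (μ + σ ^ 2 / 2)), mul_assoc,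
      ← Real.exp_add]
    congr 1
    ring
  have hind : (fun y => gaussianPDFReal 0 1 y * max (Real.exp (σ * y + μ) - K) 0)
      = (Ici c).indicator
        (fun y => M₁ * gaussianPDFReal σ 1 y - K * gaussianPDFReal 0 1 y) := by
    funext y
    by_cases hy : y ∈ Ici c
    · rw [Set.indicator_of_mem hy]
      have h1 : Real.log K - μ ≤ σ * y := by
        have := (div_le_iff₀ hσ).mp hy
        linarith [this]
      have hexp : K ≤ Real.exp (σ * y + μ) := by
        rw [← Real.exp_log hK]
        exact Real.exp_le_exp.mpr (by linarith)
      rw [max_eq_left (by linarith)]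
      rw [mul_sub, hkey y]
      ring
    · rw [Set.indicator_of_notMem hy]
      have hy' : y < c := lt_of_not_ge hy
      have h1 : σ * y < Real.log K - μ := by
        have := (lt_div_iff₀ hσ).mp hy'
        linarith [this]
      have hexp : Real.exp (σ * y + μ) ≤ K := by
        rw [← Real.exp_log hK]
        exact Real.exp_le_exp.mpr (by linarith)
      rw [max_eq_right (by linarith), mul_zero]
  rw [hind, integral_indicator measurableSet_Ici,
    integral_sub (((integrable_gaussianPDFReal σ 1).const_mul M₁).integrableOn)
      (((integrable_gaussianPDFReal 0 1).const_mul K).integrableOn),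
    integral_const_mul, integral_const_mul, phi_Ici σ c, phi_Ici 0 c, ← hd1', ← hd2']
end

section
/- Let μ ∈ ℝ, σ > 0, A > 0. Then ∫ max(A - e^x, 0) d(gaussianReal μ σ²)(x) = A·Φ(-d₂) - M₁·Φ(-d₁), where M₁ = e^{μ + σ²/2}, d₁ = (log(M₁/A) + σ²/2)/σ, d₂ = (log(M₁/A) - σ²/2)/σ, and Φ is the cumulative distribution function of the standard normal distribution. -/
open MeasureTheory ProbabilityTheory Real Set
open scoped ENNReal NNReal


lemma exp_mul_gaussianPDFReal (m : ℝ) (σ : ℝ) (hσ : 0 < σ) (x : ℝ) :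
    Real.exp x * gaussianPDFReal m ⟨σ ^ 2, sq_nonneg σ⟩ x =
      Real.exp (m + σ ^ 2 / 2) * gaussianPDFReal (m + σ ^ 2) ⟨σ ^ 2, sq_nonneg σ⟩ x := by
  simp only [gaussianPDFReal, NNReal.coe_mk]
  change rexp x * ((√(2 * π * σ ^ 2))⁻¹ * rexp (-(x - m) ^ 2 / (2 * σ ^ 2))) = rexp (m + σ ^ 2 / 2) * ((√(2 * π * σ ^ 2))⁻¹ * rexp (-(x - (m + σ ^ 2)) ^ 2 / (2 * σ ^ 2)))
  rw [mul_comm (Real.exp x), mul_assoc, ← Real.exp_add]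
  have h2 : σ ^ 2 ≠ 0 := by positivity
  have hE : rexp (-(x - m) ^ 2 / (2 * σ ^ 2) + x)
      = rexp (m + σ ^ 2 / 2) * rexp (-(x - (m + σ ^ 2)) ^ 2 / (2 * σ ^ 2)) := by
    rw [← Real.exp_add]
    congr 1
    field_simp
    ring
  rw [hE]
  ring

lemma gaussianReal_Iic_toReal (m σ : ℝ) (hσ : 0 < σ) (L : ℝ) :
    ((gaussianReal m ⟨σ ^ 2, sq_nonneg σ⟩) (Set.Iic L)).toReal =
      ProbabilityTheory.cdf (gaussianReal 0 1) ((L - m) / σ) := by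
  rw [ProbabilityTheory.cdf_eq_real, measureReal_def]
  congr 1
  have h1 : (gaussianReal m ⟨σ ^ 2, sq_nonneg σ⟩).map (· + (-m)) =
      gaussianReal 0 ⟨σ ^ 2, sq_nonneg σ⟩ := by
    erw [gaussianReal_map_add_const]; simp
  have h2 : (gaussianReal 0 ⟨σ ^ 2, sq_nonneg σ⟩).map (σ⁻¹ * ·) = gaussianReal 0 1 := by
    erw [gaussianReal_map_const_mul]
    congr 1
    · simp
    · ext
      simp only [NNReal.coe_mul, NNReal.coe_mk, NNReal.coe_one]
      change σ⁻¹ ^ 2 * σ ^ 2 = (1:ℝ)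
      field_simp
  have key : (gaussianReal 0 1) (Set.Iic ((L - m) / σ)) =
      (gaussianReal m ⟨σ ^ 2, sq_nonneg σ⟩) (Set.Iic L) := by
    rw [← h2, ← h1, Measure.map_map (measurable_const_mul _) (measurable_add_const _),
      Measure.map_apply ((measurable_const_mul _).comp (measurable_add_const _))
        measurableSet_Iic]
    congr 1
    ext x
    simp only [Function.comp_apply, Set.mem_preimage, Set.mem_Iic]
    rw [div_eq_inv_mul, mul_le_mul_iff_of_pos_left (by positivity : (0:ℝ) < σ⁻¹)]
    constructor <;> intro h <;> linarith
  rw [key]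

lemma setIntegral_gaussianReal (m : ℝ) {v : NNReal} (hv : v ≠ 0) {s : Set ℝ}
    (hs : MeasurableSet s) (f : ℝ → ℝ) :
    ∫ x in s, f x ∂(gaussianReal m v) = ∫ x in s, f x * gaussianPDFReal m v x := by
  rw [gaussianReal_of_var_ne_zero m hv, restrict_withDensity hs]
  have hpdf : gaussianPDF m v = fun x => ((gaussianPDFReal m v x).toNNReal : ℝ≥0∞) := by
    ext x; rw [gaussianPDF_def]; rfl
  rw [hpdf, integral_withDensity_eq_integral_smul
    ((measurable_gaussianPDFReal m v).real_toNNReal) f]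
  congr 1
  ext x
  rw [NNReal.smul_def, smul_eq_mul, Real.coe_toNNReal _ (gaussianPDFReal_nonneg m v x),
    mul_comm]


lemma integral_pdf_Iic (m σ : ℝ) (hσ : 0 < σ) (L : ℝ) :
    ∫ x in Set.Iic L, gaussianPDFReal m ⟨σ ^ 2, sq_nonneg σ⟩ x =
      ProbabilityTheory.cdf (gaussianReal 0 1) ((L - m) / σ) := by
  have hv : (⟨σ ^ 2, sq_nonneg σ⟩ : NNReal) ≠ 0 := fun h =>
    (pow_ne_zero 2 hσ.ne') (by have := congrArg NNReal.toReal h; exact this)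
  rw [← gaussianReal_Iic_toReal m σ hσ L, gaussianReal_apply_eq_integral _ hv]
  exact (ENNReal.toReal_ofReal (integral_nonneg fun x => gaussianPDFReal_nonneg _ _ _)).symm

/-- Black–Scholes–Merton put expectation: for a lognormal underlying `e^x`,
`x ~ N(μ, σ²)`, and strike `A > 0`,
`E[(A - e^x)⁺] = A·Φ(-d₂) - M₁·Φ(-d₁)` with `M₁ = e^{μ + σ²/2}`,
`d₁ = (log(M₁/A) + σ²/2)/σ`, `d₂ = (log(M₁/A) - σ²/2)/σ`,
and `Φ` the standard normal CDF. -/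
theorem blackScholes_put_expectation (μ σ A : ℝ) (hσ : 0 < σ) (hA : 0 < A)
    (Φ : ℝ → ℝ) (hΦ : Φ = fun x => ProbabilityTheory.cdf (gaussianReal 0 1) x)
    (M₁ d₁ d₂ : ℝ)
    (hM₁ : M₁ = Real.exp (μ + σ ^ 2 / 2))
    (hd₁ : d₁ = (Real.log (M₁ / A) + σ ^ 2 / 2) / σ)
    (hd₂ : d₂ = (Real.log (M₁ / A) - σ ^ 2 / 2) / σ) :
    ∫ x, max (A - Real.exp x) 0 ∂(gaussianReal μ ⟨σ ^ 2, sq_nonneg σ⟩) =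
      A * Φ (-d₂) - M₁ * Φ (-d₁) := by
  set v : NNReal := ⟨σ ^ 2, sq_nonneg σ⟩ with hvdef
  have hv : v ≠ 0 := by
    simp only [hvdef, ne_eq, ← NNReal.coe_eq_zero, NNReal.coe_mk]
    intro h
    have := congrArg NNReal.toReal h
    change σ ^ 2 = 0 at this
    exact absurd this (by positivity)
  set P := gaussianReal μ v with hP
  set L := Real.log A with hL
  -- log of M₁ / A
  have hlog : Real.log (M₁ / A) = μ + σ ^ 2 / 2 - L := by
    rw [hM₁, Real.log_div (Real.exp_ne_zero _) (ne_of_gt hA), Real.log_exp, hL]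
  have hd2' : -d₂ = (L - μ) / σ := by
    rw [hd₂, hlog]; field_simp; ring
  have hd1' : -d₁ = (L - (μ + σ ^ 2)) / σ := by
    rw [hd₁, hlog]; field_simp; ring
  -- rewrite max as indicator
  have hmax : (fun x => max (A - Real.exp x) 0) =
      Set.indicator (Set.Iic L) (fun x => A - Real.exp x) := by
    ext x
    by_cases h : x ∈ Set.Iic L
    · rw [Set.indicator_of_mem h]
      have : Real.exp x ≤ A := by
        calc Real.exp x ≤ Real.exp L := Real.exp_le_exp.2 h
        _ = A := Real.exp_log hA
      exact max_eq_left (by linarith)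
    · rw [Set.indicator_of_notMem h]
      have : A < Real.exp x := by
        calc A = Real.exp L := (Real.exp_log hA).symm
        _ < Real.exp x := Real.exp_lt_exp.2 (lt_of_not_ge h)
      exact max_eq_right (by linarith)
  rw [hmax, integral_indicator measurableSet_Iic]
  -- integrability
  have hexp_int : Integrable (fun x => Real.exp x) (P.restrict (Set.Iic L)) := by
    refine Integrable.mono' (integrable_const A) (Real.continuous_exp.aestronglyMeasurable) ?_
    refine (ae_restrict_iff' measurableSet_Iic).2 (ae_of_all _ fun x hx => ?_)
    rw [Real.norm_eq_abs, abs_of_pos (Real.exp_pos x)]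
    calc Real.exp x ≤ Real.exp L := Real.exp_le_exp.2 hx
    _ = A := Real.exp_log hA
  rw [integral_sub (integrable_const A) hexp_int, setIntegral_const]
  -- first term
  have hterm1 : (P (Set.Iic L)).toReal • A = A * Φ (-d₂) := by
    rw [hP, gaussianReal_Iic_toReal μ σ hσ L, hΦ, hd2', smul_eq_mul, mul_comm]
  -- second term
  have hterm2 : ∫ x in Set.Iic L, Real.exp x ∂P = M₁ * Φ (-d₁) := by
    rw [hP, setIntegral_gaussianReal μ hv measurableSet_Iic]
    have : ∀ x, Real.exp x * gaussianPDFReal μ v x =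
        M₁ * gaussianPDFReal (μ + σ ^ 2) v x := by
      intro x
      rw [hM₁, hvdef]
      exact exp_mul_gaussianPDFReal μ σ hσ x
    simp_rw [this]
    rw [integral_const_mul, hvdef, integral_pdf_Iic (μ + σ ^ 2) σ hσ L, hΦ, hd1']
  rw [measureReal_def, hterm1, hterm2]
end
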